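/- Let a and b be coprime positive integers. Then the number of (a,b)-parking functions equals b^{a−1}. -/

import Mathlib

open Finset

/-- An `(a,b)`-parking function is `f : Fin a → ℕ` such that for every
`i ∈ {1,…,a}` at least `i` of the values `f j` satisfy `a·f(j) ≤ b·(i−1)`. -/
def IsParkingFunction (a b : ℕ) (f : Fin a → ℕ) : Prop :=
  ∀ i : ℕ, 1 ≤ i → i ≤ a →
    i ≤ (Finset.univ.filter fun j : Fin a => a * f j ≤ b * (i - 1)).card

namespace Stmt5Aux

variable {a b : ℕ}

/-- number of values with `val ≤ t` -/
def cnt (f : Fin a → ZMod b) (t : ℕ) : ℕ :=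
  (Finset.univ.filter fun j => (f j).val ≤ t).card

/-- fiber size -/
def fib (f : Fin a → ZMod b) (s : ZMod b) : ℕ :=
  (Finset.univ.filter fun j => f j = s).card

def D (f : Fin a → ZMod b) (s : ℕ) : ℤ :=
  (b : ℤ) * fib f ((s : ℕ) : ZMod b) - a

def W (f : Fin a → ZMod b) (t : ℕ) : ℤ :=
  ∑ s ∈ Finset.range t, D f s

lemma fib_eq (hb : 0 < b) (f : Fin a → ZMod b) {v : ℕ} (hv : v < b) :
    fib f ((v : ℕ) : ZMod b) = (Finset.univ.filter fun j => (f j).val = v).card := by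
  haveI : NeZero b := ⟨hb.ne'⟩
  unfold fib
  congr 1
  apply Finset.filter_congr
  intro j _
  constructor
  · intro h; rw [h, ZMod.val_cast_of_lt hv]
  · intro h
    apply ZMod.val_injective
    rw [h, ZMod.val_cast_of_lt hv]

lemma sum_fib (hb : 0 < b) (f : Fin a → ZMod b) :
    ∑ s ∈ Finset.range b, fib f ((s : ℕ) : ZMod b) = a := by
  haveI : NeZero b := ⟨hb.ne'⟩
  have h1 : (Finset.univ : Finset (Fin a)).card
      = ∑ v ∈ Finset.range b, (Finset.univ.filter fun j => (f j).val = v).card := by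
    apply Finset.card_eq_sum_card_fiberwise
    intro j _
    exact Finset.mem_range.2 (ZMod.val_lt (f j))
  rw [Finset.sum_congr rfl fun v hv => fib_eq hb f (Finset.mem_range.1 hv), ← h1]
  simp

lemma cnt_eq_sum (hb : 0 < b) (f : Fin a → ZMod b) {t : ℕ} (ht : t < b) :
    cnt f t = ∑ s ∈ Finset.range (t + 1), fib f ((s : ℕ) : ZMod b) := by
  haveI : NeZero b := ⟨hb.ne'⟩
  unfold cnt
  have h1 : (Finset.univ.filter fun j => (f j).val ≤ t).card
      = ∑ v ∈ Finset.range (t + 1), ((Finset.univ.filter fun j => (f j).val ≤ t).filter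
          fun j => (f j).val = v).card := by
    apply Finset.card_eq_sum_card_fiberwise
    intro j hj
    simp only [Finset.mem_coe, Finset.mem_filter] at hj
    exact Finset.mem_range.2 (Nat.lt_succ_of_le hj.2)
  rw [h1]
  apply Finset.sum_congr rfl
  intro v hv
  have hvt : v ≤ t := Nat.lt_succ_iff.1 (Finset.mem_range.1 hv)
  rw [fib_eq hb f (lt_of_le_of_lt hvt ht)]
  congr 1
  rw [Finset.filter_filter]
  apply Finset.filter_congr
  intro j _
  constructor
  · intro h; exact h.2
  · intro h; exact ⟨h ▸ hvt, h⟩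

lemma W_b (hb : 0 < b) (f : Fin a → ZMod b) : W f b = 0 := by
  unfold W D
  rw [Finset.sum_sub_distrib, ← Finset.mul_sum, Finset.sum_const, Finset.card_range]
  rw [show ∑ s ∈ Finset.range b, (fib f ((s : ℕ) : ZMod b) : ℤ)
      = ((∑ s ∈ Finset.range b, fib f ((s : ℕ) : ZMod b) : ℕ) : ℤ) by push_cast; ring]
  rw [sum_fib hb f]
  ring

lemma D_add_b (hb : 0 < b) (f : Fin a → ZMod b) (s : ℕ) : D f (s + b) = D f s := by
  unfold D
  congr 2
  push_cast
  simp

lemma W_add_b (hb : 0 < b) (f : Fin a → ZMod b) (t : ℕ) : W f (t + b) = W f t := by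
  have key : W f (b + t) = W f b + ∑ s ∈ Finset.Ico b (b + t), D f s := by
    simp only [W, Finset.range_eq_Ico]
    exact (Finset.sum_Ico_consecutive (D f) (Nat.zero_le b) (Nat.le_add_right b t)).symm
  rw [show t + b = b + t by ring, key, W_b hb f, zero_add, Finset.sum_Ico_eq_sum_range]
  rw [Nat.add_sub_cancel_left, W]
  apply Finset.sum_congr rfl
  intro s _
  rw [show b + s = s + b by ring, D_add_b hb]

lemma W_mod (hb : 0 < b) (f : Fin a → ZMod b) (t : ℕ) : W f t = W f (t % b) := by
  induction t using Nat.strong_induction_on with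
  | _ t ih =>
    by_cases h : t < b
    · rw [Nat.mod_eq_of_lt h]
    · push_neg at h
      have h1 : t - b + b = t := Nat.sub_add_cancel h
      have h2 : t - b < t := Nat.sub_lt (lt_of_lt_of_le hb h) hb
      rw [← h1, W_add_b hb, ih _ h2, Nat.add_mod_right]

/-- parking condition for `ZMod b`-valued functions -/
def Pky (f : Fin a → ZMod b) : Prop :=
  ∀ t : ℕ, t < b → (a : ℤ) * (t + 1) ≤ (b : ℤ) * cnt f t

lemma W_succ_eq (hb : 0 < b) (f : Fin a → ZMod b) {t : ℕ} (ht : t < b) :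
    W f (t + 1) = (b : ℤ) * cnt f t - (a : ℤ) * (t + 1) := by
  unfold W D
  rw [Finset.sum_sub_distrib, ← Finset.mul_sum, Finset.sum_const, Finset.card_range]
  rw [cnt_eq_sum hb f ht]
  push_cast
  ring

lemma pky_iff (hb : 0 < b) (f : Fin a → ZMod b) :
    Pky f ↔ ∀ u : ℕ, 0 ≤ W f u := by
  constructor
  · intro h u
    rw [W_mod hb f u]
    rcases Nat.eq_zero_or_pos (u % b) with h0 | h0
    · rw [h0]; simp [W]
    · have hlt : u % b < b := Nat.mod_lt u hb
      obtain ⟨t, ht'⟩ : ∃ t, u % b = t + 1 := ⟨u % b - 1, by omega⟩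
      rw [ht', W_succ_eq hb f (by omega)]
      have := h t (by omega)
      linarith
  · intro h t ht
    have := h (t + 1)
    rw [W_succ_eq hb f ht] at this
    linarith

/-- pointwise shift -/
def shf (f : Fin a → ZMod b) (c : ZMod b) : Fin a → ZMod b := fun j => f j + c

lemma fib_shf (f : Fin a → ZMod b) (c : ZMod b) (s : ZMod b) :
    fib (shf f c) s = fib f (s - c) := by
  unfold fib shf
  congr 1
  apply Finset.filter_congr
  intro j _
  exact eq_sub_iff_add_eq.symm

/-- the rotation offset associated to `c` -/
def eOf (b : ℕ) (c : ZMod b) : ℕ := (b - c.val) % b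

lemma eOf_lt (hb : 0 < b) (c : ZMod b) : eOf b c < b := Nat.mod_lt _ hb

lemma eOf_cast (hb : 0 < b) (c : ZMod b) : ((eOf b c : ℕ) : ZMod b) = -c := by
  haveI : NeZero b := ⟨hb.ne'⟩
  unfold eOf
  rw [ZMod.natCast_mod, Nat.cast_sub (ZMod.val_le c), ZMod.natCast_self, ZMod.natCast_val,
    ZMod.cast_id]
  ring

lemma D_shf (hb : 0 < b) (f : Fin a → ZMod b) (c : ZMod b) (s : ℕ) :
    D (shf f c) s = D f (s + eOf b c) := by
  unfold D
  rw [fib_shf]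
  congr 3
  push_cast [eOf_cast hb c]
  ring

lemma W_shf (hb : 0 < b) (f : Fin a → ZMod b) (c : ZMod b) (t : ℕ) :
    W (shf f c) t = W f (t + eOf b c) - W f (eOf b c) := by
  set e := eOf b c with he
  have key : W f (e + t) = W f e + ∑ s ∈ Finset.Ico e (e + t), D f s := by
    simp only [W, Finset.range_eq_Ico]
    exact (Finset.sum_Ico_consecutive (D f) (Nat.zero_le e) (Nat.le_add_right e t)).symm
  rw [show t + e = e + t by ring, key]
  rw [Finset.sum_Ico_eq_sum_range, Nat.add_sub_cancel_left]
  rw [show W f e + ∑ s ∈ Finset.range t, D f (e + s) - W f e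
      = ∑ s ∈ Finset.range t, D f (e + s) by ring]
  unfold W
  apply Finset.sum_congr rfl
  intro s _
  rw [D_shf hb f c s, show s + e = e + s by ring]

/-- `e` is a position of minimum of `W f` -/
def Good (f : Fin a → ZMod b) (e : ℕ) : Prop := ∀ s : ℕ, W f e ≤ W f s

lemma pky_shf_iff (hb : 0 < b) (f : Fin a → ZMod b) (c : ZMod b) :
    Pky (shf f c) ↔ Good f (eOf b c) := by
  set e := eOf b c with he
  have helt : e < b := eOf_lt hb c
  rw [pky_iff hb]
  constructor
  · intro h s
    have hu := h (s + b - e)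
    rw [W_shf hb f c] at hu
    have : s + b - e + e = s + b := by omega
    rw [this, W_add_b hb] at hu
    linarith
  · intro h u
    rw [W_shf hb f c]
    have := h (u + e)
    linarith

lemma good_unique (hb : 0 < b) (hab : Nat.Coprime a b) (f : Fin a → ZMod b)
    {e1 e2 : ℕ} (h1 : e1 < b) (h2 : e2 < b) (hg1 : Good f e1) (hg2 : Good f e2) :
    e1 = e2 := by
  by_contra hne
  -- wlog e1 < e2
  wlog hlt : e1 < e2 generalizing e1 e2
  · exact this h2 h1 hg2 hg1 (Ne.symm hne) (by omega)
  have heq : W f e1 = W f e2 := le_antisymm (hg1 e2) (hg2 e1)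
  have key : W f e2 = W f e1 + ∑ s ∈ Finset.Ico e1 e2, D f s := by
    simp only [W, Finset.range_eq_Ico]
    exact (Finset.sum_Ico_consecutive (D f) (Nat.zero_le e1) (le_of_lt hlt)).symm
  have hsum : ∑ s ∈ Finset.Ico e1 e2, D f s = 0 := by
    rw [key] at heq; linarith
  -- compute the sum
  have hexp : ∑ s ∈ Finset.Ico e1 e2, D f s
      = (b : ℤ) * (∑ s ∈ Finset.Ico e1 e2, (fib f ((s : ℕ) : ZMod b) : ℤ))
        - (a : ℤ) * (e2 - e1) := by
    unfold D
    rw [Finset.sum_sub_distrib, ← Finset.mul_sum, Finset.sum_const, Nat.card_Ico]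
    rw [nsmul_eq_mul]
    push_cast
    rw [Nat.cast_sub (le_of_lt hlt)]
    ring
  set K : ℕ := ∑ s ∈ Finset.Ico e1 e2, fib f ((s : ℕ) : ZMod b) with hK
  have hKc : (∑ s ∈ Finset.Ico e1 e2, (fib f ((s : ℕ) : ZMod b) : ℤ)) = (K : ℤ) := by
    push_cast [hK]; ring
  rw [hexp, hKc] at hsum
  have hnat : b * K = a * (e2 - e1) := by
    have : (b : ℤ) * K = (a : ℤ) * ((e2 : ℤ) - e1) := by linarith
    have h3 : ((b * K : ℕ) : ℤ) = ((a * (e2 - e1) : ℕ) : ℤ) := by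
      push_cast [Nat.cast_sub (le_of_lt hlt)]
      linarith
    exact_mod_cast h3
  have hdvd : b ∣ a * (e2 - e1) := ⟨K, hnat.symm⟩
  have hdvd2 : b ∣ (e2 - e1) := (Nat.Coprime.dvd_of_dvd_mul_left (hab.symm)) hdvd
  have := Nat.le_of_dvd (by omega) hdvd2
  omega

lemma good_exists (hb : 0 < b) (f : Fin a → ZMod b) : ∃ e < b, Good f e := by
  obtain ⟨e, he, hmin⟩ := Finset.exists_min_image (Finset.range b) (W f)
    ⟨0, Finset.mem_range.2 hb⟩
  refine ⟨e, Finset.mem_range.1 he, fun s => ?_⟩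
  rw [W_mod hb f s]
  exact hmin _ (Finset.mem_range.2 (Nat.mod_lt _ hb))

lemma exists_unique_shift (hb : 0 < b) (hab : Nat.Coprime a b) (f : Fin a → ZMod b) :
    ∃! c : ZMod b, Pky (shf f c) := by
  haveI : NeZero b := ⟨hb.ne'⟩
  obtain ⟨e, helt, hg⟩ := good_exists hb f
  refine ⟨-(e : ZMod b), ?_, ?_⟩
  · show Pky (shf f (-(e : ZMod b)))
    rw [pky_shf_iff hb]
    have hcast : ((eOf b (-(e : ZMod b)) : ℕ) : ZMod b) = ((e : ℕ) : ZMod b) := by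
      rw [eOf_cast hb]; ring
    have : eOf b (-(e : ZMod b)) = e := by
      have h1 := eOf_lt hb (-(e : ZMod b))
      have := congrArg ZMod.val hcast
      rwa [ZMod.val_cast_of_lt h1, ZMod.val_cast_of_lt helt] at this
    rwa [this]
  · intro c hc
    have hc : Pky (shf f c) := hc
    rw [pky_shf_iff hb] at hc
    have heq : eOf b c = e := good_unique hb hab f (eOf_lt hb c) helt hc hg
    have := eOf_cast hb c
    rw [heq] at this
    have : -c = -(-(e : ZMod b)) := by rw [← this]; ring
    simpa using (neg_injective this)

lemma shf_shf (f : Fin a → ZMod b) (c d : ZMod b) :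
    shf (shf f c) d = shf f (c + d) := by
  funext j; simp [shf, add_assoc]

lemma shf_zero (f : Fin a → ZMod b) : shf f 0 = f := by
  funext j; simp [shf]

lemma park_lt (ha : 0 < a) (hb : 0 < b) {g : Fin a → ℕ}
    (hg : IsParkingFunction a b g) (j : Fin a) : g j < b := by
  have h := hg a ha le_rfl
  have hcard : (Finset.univ.filter fun j : Fin a => a * g j ≤ b * (a - 1)).card = a := by
    refine le_antisymm ?_ h
    calc (Finset.univ.filter fun j : Fin a => a * g j ≤ b * (a - 1)).card
        ≤ (Finset.univ : Finset (Fin a)).card := Finset.card_filter_le _ _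
      _ = a := by simp
  have huniv : (Finset.univ.filter fun j : Fin a => a * g j ≤ b * (a - 1))
      = Finset.univ := Finset.eq_univ_of_card _ (by simpa using hcard)
  have hj : a * g j ≤ b * (a - 1) := by
    have hmem : j ∈ (Finset.univ.filter fun j : Fin a => a * g j ≤ b * (a - 1)) := by
      rw [huniv]; exact Finset.mem_univ j
    exact (Finset.mem_filter.1 hmem).2
  have h1 : b * (a - 1) < b * a := mul_lt_mul_of_pos_left (by omega) hb
  have h2 : a * g j < a * b := by
    calc a * g j ≤ b * (a - 1) := hj
      _ < b * a := h1
      _ = a * b := by ring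
  exact lt_of_mul_lt_mul_left h2 (Nat.zero_le a)

lemma isPark_of_pky (ha : 0 < a) (hb : 0 < b) (f : Fin a → ZMod b) (hf : Pky f) :
    IsParkingFunction a b (fun j => (f j).val) := by
  intro i h1 h2
  set t := b * (i - 1) / a with hts
  have htlt : t < b := by
    rw [hts, Nat.div_lt_iff_lt_mul ha]
    calc b * (i - 1) < b * a := mul_lt_mul_of_pos_left (by omega) hb
      _ = b * a := rfl
  have hP := hf t htlt
  have hdm := Nat.div_add_mod (b * (i - 1)) a
  rw [← hts] at hdm
  have hmod : b * (i - 1) % a < a := Nat.mod_lt _ ha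
  have hat : a * t ≤ b * (i - 1) := Nat.le.intro hdm
  have hat1 : b * (i - 1) + 1 ≤ a * (t + 1) := by
    have hexp : a * (t + 1) = a * t + a := by ring
    linarith
  have hsub : (Finset.univ.filter fun j => (f j).val ≤ t)
      ⊆ (Finset.univ.filter fun j : Fin a => a * (f j).val ≤ b * (i - 1)) := by
    intro j hj
    simp only [Finset.mem_filter, Finset.mem_univ, true_and] at hj ⊢
    calc a * (f j).val ≤ a * t := Nat.mul_le_mul le_rfl hj
      _ ≤ b * (i - 1) := hat
  have hPn : a * (t + 1) ≤ b * cnt f t := by exact_mod_cast hP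
  have hlt2 : b * (i - 1) < b * cnt f t := by linarith
  have hlt3 : i - 1 < cnt f t := lt_of_mul_lt_mul_left hlt2 (Nat.zero_le b)
  have hcnt : i ≤ cnt f t := by omega
  exact le_trans hcnt (Finset.card_le_card hsub)

lemma pky_of_isPark (ha : 0 < a) (hb : 0 < b) (hab : Nat.Coprime a b)
    {g : Fin a → ℕ} (hg : IsParkingFunction a b g) :
    Pky (fun j => ((g j : ℕ) : ZMod b)) := by
  haveI : NeZero b := ⟨hb.ne'⟩
  have hlt : ∀ j, g j < b := park_lt ha hb hg
  intro t ht
  have hcnt : cnt (fun j => ((g j : ℕ) : ZMod b)) t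
      = (Finset.univ.filter fun j => g j ≤ t).card := by
    unfold cnt
    congr 1
    apply Finset.filter_congr
    intro j _
    rw [ZMod.val_cast_of_lt (hlt j)]
  by_cases hcase : t + 1 = b
  · have huniv : (Finset.univ.filter fun j : Fin a => g j ≤ t) = Finset.univ := by
      apply Finset.eq_univ_of_forall
      intro j
      simp only [Finset.mem_filter, Finset.mem_univ, true_and]
      have := hlt j; omega
    rw [hcnt, huniv]
    simp only [Finset.card_univ, Fintype.card_fin]
    have hbz : ((t : ℤ) + 1) = (b : ℤ) := by exact_mod_cast hcase
    rw [hbz]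
    exact le_of_eq (by ring)
  · have htb : t + 1 < b := by omega
    have hndvd : ¬ b ∣ a * (t + 1) := by
      intro hd
      have hd2 : b ∣ (t + 1) := (Nat.Coprime.dvd_of_dvd_mul_left hab.symm) hd
      have := Nat.le_of_dvd (by omega) hd2
      omega
    set i := a * (t + 1) / b + 1 with hi
    have hdm := Nat.div_add_mod (a * (t + 1)) b
    have hmod0 : a * (t + 1) % b ≠ 0 := fun h => hndvd (Nat.dvd_of_mod_eq_zero h)
    have hmodlt : a * (t + 1) % b < b := Nat.mod_lt _ hb
    have h1i : 1 ≤ i := by rw [hi]; exact Nat.le_add_left 1 _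
    have hia : i ≤ a := by
      have hq : a * (t + 1) / b < a := by
        rw [Nat.div_lt_iff_lt_mul hb]
        exact mul_lt_mul_of_pos_left htb ha
      rw [hi]
      exact Nat.succ_le_of_lt hq
    have hpark := hg i h1i hia
    have hi1 : i - 1 = a * (t + 1) / b := by rw [hi]; simp
    have hsub : (Finset.univ.filter fun j : Fin a => a * g j ≤ b * (i - 1))
        ⊆ (Finset.univ.filter fun j => g j ≤ t) := by
      intro j hj
      simp only [Finset.mem_filter, Finset.mem_univ, true_and] at hj ⊢
      have hbi : b * (i - 1) < a * (t + 1) := by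
        rw [hi1]
        have hr : a * (t + 1) % b > 0 := Nat.pos_of_ne_zero hmod0
        linarith
      have hja : a * g j < a * (t + 1) := lt_of_le_of_lt hj hbi
      have := lt_of_mul_lt_mul_left hja (Nat.zero_le a)
      omega
    have hcard : i ≤ (Finset.univ.filter fun j : Fin a => g j ≤ t).card :=
      le_trans hpark (Finset.card_le_card hsub)
    have hbi2 : a * (t + 1) ≤ b * i := by
      have hexp : b * i = b * (a * (t + 1) / b) + b := by rw [hi]; ring
      linarith
    rw [hcnt]
    have hfin : a * (t + 1) ≤ b * (Finset.univ.filter fun j : Fin a => g j ≤ t).card :=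
      le_trans hbi2 (Nat.mul_le_mul le_rfl hcard)
    exact_mod_cast hfin

lemma card_count (ha : 0 < a) (hb : 0 < b) (hab : Nat.Coprime a b) :
    Nat.card {f : Fin a → ZMod b // Pky f} * b = b ^ a := by
  classical
  haveI : NeZero b := ⟨hb.ne'⟩
  have hbij : Function.Bijective
      (fun p : {f : Fin a → ZMod b // Pky f} × ZMod b => shf p.1.1 (-p.2)) := by
    constructor
    · rintro ⟨⟨g1, hg1⟩, c1⟩ ⟨⟨g2, hg2⟩, c2⟩ hEq
      simp only at hEq
      set f := shf g1 (-c1) with hf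
      have h1 : shf f c1 = g1 := by rw [hf, shf_shf, neg_add_cancel, shf_zero]
      have h2 : shf f c2 = g2 := by rw [hEq, shf_shf, neg_add_cancel, shf_zero]
      obtain ⟨c, -, huniq⟩ := exists_unique_shift hb hab f
      have e1 : c1 = c := huniq c1 (by show Pky (shf f c1); rw [h1]; exact hg1)
      have e2 : c2 = c := huniq c2 (by show Pky (shf f c2); rw [h2]; exact hg2)
      have hc : c1 = c2 := e1.trans e2.symm
      have hgg : g1 = g2 := by rw [← h1, ← h2, hc]
      subst hc
      simp only [Prod.mk.injEq, Subtype.mk.injEq]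
      exact ⟨hgg, trivial⟩
    · intro f
      obtain ⟨c, hc, -⟩ := exists_unique_shift hb hab f
      have hc : Pky (shf f c) := hc
      refine ⟨⟨⟨shf f c, hc⟩, c⟩, ?_⟩
      simp only
      rw [shf_shf, add_neg_cancel, shf_zero]
  have hcongr := Nat.card_congr (Equiv.ofBijective _ hbij)
  rw [Nat.card_prod, Nat.card_eq_fintype_card (α := ZMod b), ZMod.card,
    Nat.card_eq_fintype_card (α := Fin a → ZMod b)] at hcongr
  rw [hcongr]
  rw [Fintype.card_fun, ZMod.card, Fintype.card_fin]

theorem stmt5' (a b : ℕ) (ha : 0 < a) (hb : 0 < b) (hab : Nat.Coprime a b) :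
    {f : Fin a → ℕ | IsParkingFunction a b f}.ncard = b ^ (a - 1) := by
  classical
  haveI : NeZero b := ⟨hb.ne'⟩
  have himg : {f : Fin a → ℕ | IsParkingFunction a b f}
      = (fun (f : Fin a → ZMod b) (j : Fin a) => (f j).val) '' {f | Pky f} := by
    ext g
    constructor
    · intro hg
      refine ⟨fun j => ((g j : ℕ) : ZMod b), pky_of_isPark ha hb hab hg, ?_⟩
      funext j
      exact ZMod.val_cast_of_lt (park_lt ha hb hg j)
    · rintro ⟨f, hf, rfl⟩
      exact isPark_of_pky ha hb f hf
  have hinj : Function.Injective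
      (fun (f : Fin a → ZMod b) (j : Fin a) => (f j).val) := by
    intro f1 f2 h
    funext j
    exact ZMod.val_injective b (congrFun h j)
  rw [himg, Set.ncard_image_of_injective _ hinj]
  have hset : {f : Fin a → ZMod b | Pky f}.ncard
      = Nat.card {f : Fin a → ZMod b // Pky f} := by
    rw [← Nat.card_coe_set_eq]
    rfl
  rw [hset]
  have hc := card_count ha hb hab
  have hpow : b ^ a = b ^ (a - 1) * b := by
    rw [← pow_succ]
    congr 1
    omega
  rw [hpow] at hc
  exact Nat.eq_of_mul_eq_mul_right hb hc

end Stmt5Aux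

/-- for coprime positive integers `a, b`, the number of
`(a,b)`-parking functions equals `b^(a−1)`. -/
theorem stmt5 (a b : ℕ) (ha : 0 < a) (hb : 0 < b) (hab : Nat.Coprime a b) :
    {f : Fin a → ℕ | IsParkingFunction a b f}.ncard = b ^ (a - 1) := by
  exact Stmt5Aux.stmt5' a b ha hb hab
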